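/- Let ℓ ≥ 2 be even and V = ⟨e₁⟩ × ⋯ × ⟨e_ℓ⟩ an elementary abelian 2-group of rank ℓ. Let r denote the right regular representation of V, let ω = r(e_{ℓ-1}e_ℓ), and let χ, ψ be the automorphisms of V defined (with convention e₋₁ = e₀ = 1) by e_{2i+1}^χ = e_{2i+1}, e_{2i+2}^χ = e_{2i+1}e_{2i+2}, e_{2i+1}^ψ = e_{2i-1}e_{2i}e_{2i+2}, e_{2i+2}^ψ = e_{2i-1}e_{2i}e_{2i+1} for 0 ≤ i ≤ (ℓ-2)/2. Then the subgroup ⟨χ, ψ, ω⟩ of Sym(V) is transitive on V; in fact it contains r(V). -/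

import Mathlib

/-- `V = ⟨e₁⟩ × ⋯ × ⟨e_ℓ⟩`, an elementary abelian 2-group of rank `ℓ`, written
multiplicatively. -/
abbrev Vgrp (l : ℕ) := Multiplicative (Fin l → ZMod 2)

/-- The generator `e j` of `V` for `1 ≤ j ≤ ℓ`; by convention `e 0 = 1`
(covering `e₋₁ = e₀ = 1`), and `e j = 1` for `j > ℓ`. -/
def eGen (l j : ℕ) : Vgrp l :=
  Multiplicative.ofAdd (fun i : Fin l => if (i : ℕ) + 1 = j then 1 else 0)

lemma Vgrp.mul_self {l : ℕ} (v : Vgrp l) : v * v = 1 := by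
  rw [← ofAdd_toAdd v, ← ofAdd_add, ← ofAdd_zero]
  congr 1
  funext i
  exact (by decide : ∀ a : ZMod 2, a + a = 0) _

lemma mulAut_conj_mulRight {M : Type*} [CommGroup M] (α : MulAut M) (v : M) :
    (α.toEquiv : Equiv.Perm M) * Equiv.mulRight v * ((α.toEquiv : Equiv.Perm M))⁻¹ =
      Equiv.mulRight (α v) := by
  ext x
  simp [Equiv.Perm.mul_apply, Equiv.Perm.inv_def, map_mul]

lemma eGen_single {l : ℕ} (i : Fin l) :
    eGen l ((i : ℕ) + 1) = Multiplicative.ofAdd (Pi.single i 1) := by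
  unfold eGen
  congr 1
  funext i'
  rw [Pi.single_apply]
  by_cases h : i' = i
  · simp [h]
  · have hne : ¬ ((i' : ℕ) + 1 = (i : ℕ) + 1) := by
      intro hc
      exact h (Fin.ext (by omega))
    simp [h, hne, Fin.val_inj]

/-- Let `ℓ ≥ 2` be even and `V` elementary abelian of rank `ℓ`. Let `ω` be the right
translation by `e_{ℓ-1}e_ℓ`, and let `χ, ψ` be the automorphisms of `V` defined (with
the convention `e₋₁ = e₀ = 1`) by `e_{2i+1}^χ = e_{2i+1}`, `e_{2i+2}^χ = e_{2i+1}e_{2i+2}`,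
`e_{2i+1}^ψ = e_{2i-1}e_{2i}e_{2i+2}`, `e_{2i+2}^ψ = e_{2i-1}e_{2i}e_{2i+1}` for
`0 ≤ i ≤ (ℓ-2)/2` (equivalently `2i + 2 ≤ ℓ` since `ℓ` is even). Then the subgroup
`⟨χ, ψ, ω⟩` of `Sym(V)` contains all right translations `r(v)`, and is transitive
on `V`. -/
theorem chi_psi_omega_transitive (l : ℕ) (hl2 : 2 ≤ l) (hleven : Even l)
    (χ ψ : MulAut (Vgrp l))
    (hχψ : ∀ i : ℕ, 2 * i + 2 ≤ l →
      χ (eGen l (2 * i + 1)) = eGen l (2 * i + 1) ∧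
      χ (eGen l (2 * i + 2)) = eGen l (2 * i + 1) * eGen l (2 * i + 2) ∧
      ψ (eGen l (2 * i + 1)) = eGen l (2 * i - 1) * eGen l (2 * i) * eGen l (2 * i + 2) ∧
      ψ (eGen l (2 * i + 2)) = eGen l (2 * i - 1) * eGen l (2 * i) * eGen l (2 * i + 1)) :
    (∀ v : Vgrp l, Equiv.mulRight v ∈
      Subgroup.closure {(χ.toEquiv : Equiv.Perm (Vgrp l)), (ψ.toEquiv : Equiv.Perm (Vgrp l)),
        Equiv.mulRight (eGen l (l - 1) * eGen l l)}) ∧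
    (∀ v w : Vgrp l, ∃ g ∈
      Subgroup.closure {(χ.toEquiv : Equiv.Perm (Vgrp l)), (ψ.toEquiv : Equiv.Perm (Vgrp l)),
        Equiv.mulRight (eGen l (l - 1) * eGen l l)}, g v = w) := by
  obtain ⟨c, hc⟩ := hleven
  set G := Subgroup.closure {(χ.toEquiv : Equiv.Perm (Vgrp l)),
      (ψ.toEquiv : Equiv.Perm (Vgrp l)),
      Equiv.mulRight (eGen l (l - 1) * eGen l l)} with hGdef
  -- generator memberships
  have hχmem : (χ.toEquiv : Equiv.Perm (Vgrp l)) ∈ G :=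
    Subgroup.subset_closure (by simp)
  have hψmem : (ψ.toEquiv : Equiv.Perm (Vgrp l)) ∈ G :=
    Subgroup.subset_closure (by simp)
  have hωmem : Equiv.mulRight (eGen l (l - 1) * eGen l l) ∈ G :=
    Subgroup.subset_closure (by simp)
  -- T is the set of translations in G
  have hT_mul : ∀ {a b : Vgrp l}, Equiv.mulRight a ∈ G → Equiv.mulRight b ∈ G →
      Equiv.mulRight (a * b) ∈ G := by
    intro a b ha hb
    have h : Equiv.mulRight (a * b) = Equiv.mulRight b * Equiv.mulRight a := by
      ext x
      simp [Equiv.Perm.mul_apply, mul_assoc]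
    rw [h]
    exact mul_mem hb ha
  have hT_chi : ∀ {v : Vgrp l}, Equiv.mulRight v ∈ G → Equiv.mulRight (χ v) ∈ G := by
    intro v hv
    rw [← mulAut_conj_mulRight χ v]
    exact mul_mem (mul_mem hχmem hv) (inv_mem hχmem)
  have hT_psi : ∀ {v : Vgrp l}, Equiv.mulRight v ∈ G → Equiv.mulRight (ψ v) ∈ G := by
    intro v hv
    rw [← mulAut_conj_mulRight ψ v]
    exact mul_mem (mul_mem hψmem hv) (inv_mem hψmem)
  -- splitting a pair via χ
  have pairSplit : ∀ i : ℕ, 2 * i + 2 ≤ l →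
      Equiv.mulRight (eGen l (2 * i + 1) * eGen l (2 * i + 2)) ∈ G →
      Equiv.mulRight (eGen l (2 * i + 2)) ∈ G ∧ Equiv.mulRight (eGen l (2 * i + 1)) ∈ G := by
    intro i hi hp
    obtain ⟨hχ1, hχ2, -, -⟩ := hχψ i hi
    have h2 := hT_chi hp
    rw [map_mul, hχ1, hχ2, ← mul_assoc, Vgrp.mul_self, one_mul] at h2
    have h3 := hT_mul hp h2
    rw [mul_assoc, Vgrp.mul_self, mul_one] at h3
    exact ⟨h2, h3⟩
  -- downward induction on pairs
  have key : ∀ m : ℕ, 2 * m + 2 ≤ l →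
      Equiv.mulRight (eGen l (l - 2 * m - 1) * eGen l (l - 2 * m)) ∈ G := by
    intro m
    induction m with
    | zero => intro _; simpa using hωmem
    | succ m ih =>
      intro h
      have hm : 2 * m + 2 ≤ l := by omega
      have hpair := ih hm
      obtain ⟨i, hi⟩ : ∃ i, l - 2 * m = 2 * i + 2 := ⟨c - m - 1, by omega⟩
      have hi1 : 1 ≤ i := by omega
      have hle : 2 * i + 2 ≤ l := by omega
      rw [show l - 2 * m - 1 = 2 * i + 1 by omega, hi] at hpair
      obtain ⟨hek, hek1⟩ := pairSplit i hle hpair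
      obtain ⟨-, -, -, hψ2⟩ := hχψ i hle
      have h3 := hT_psi hek
      rw [hψ2] at h3
      have h4 := hT_mul h3 hek1
      rw [mul_assoc, Vgrp.mul_self, mul_one] at h4
      rw [show l - 2 * (m + 1) - 1 = 2 * i - 1 by omega,
        show l - 2 * (m + 1) = 2 * i by omega]
      exact h4
  -- every generator translation is in G
  have hgen : ∀ i : ℕ, 2 * i + 2 ≤ l →
      Equiv.mulRight (eGen l (2 * i + 2)) ∈ G ∧ Equiv.mulRight (eGen l (2 * i + 1)) ∈ G := by
    intro i hi
    have hp := key (c - i - 1) (by omega)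
    rw [show l - 2 * (c - i - 1) - 1 = 2 * i + 1 by omega,
      show l - 2 * (c - i - 1) = 2 * i + 2 by omega] at hp
    exact pairSplit i hi hp
  have hsingleGen : ∀ i : Fin l, Equiv.mulRight (eGen l ((i : ℕ) + 1)) ∈ G := by
    intro i
    have hil : (i : ℕ) < l := i.isLt
    rcases Nat.even_or_odd (i : ℕ) with ⟨q, hq⟩ | ⟨q, hq⟩
    · -- i even, i + 1 = 2q + 1
      have h := (hgen q (by omega)).2
      rw [show 2 * q + 1 = (i : ℕ) + 1 by omega] at h
      exact h
    · -- i odd, i + 1 = 2q + 2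
      have h := (hgen q (by omega)).1
      rw [show 2 * q + 2 = (i : ℕ) + 1 by omega] at h
      exact h
  have hone : Equiv.mulRight (1 : Vgrp l) ∈ G := by
    rw [Equiv.mulRight_one]
    exact one_mem G
  have hsingle : ∀ (i : Fin l) (a : ZMod 2),
      Equiv.mulRight (Multiplicative.ofAdd (Pi.single i a)) ∈ G := by
    intro i a
    have ha := (by decide : ∀ b : ZMod 2, b = 0 ∨ b = 1) a
    rcases ha with rfl | rfl
    · simpa using hone
    · rw [← eGen_single]
      exact hsingleGen i
  have hall : ∀ v : Vgrp l, Equiv.mulRight v ∈ G := by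
    intro v
    have hv : v = Multiplicative.ofAdd (∑ i : Fin l, Pi.single i (Multiplicative.toAdd v i)) := by
      rw [Finset.univ_sum_single, ofAdd_toAdd]
    rw [hv]
    generalize (Multiplicative.toAdd v) = x
    have : ∀ s : Finset (Fin l),
        Equiv.mulRight (Multiplicative.ofAdd (∑ i ∈ s, Pi.single i (x i))) ∈ G := by
      intro s
      induction s using Finset.induction with
      | empty => simpa using hone
      | insert _ _ hns ih =>
        rw [Finset.sum_insert hns, ofAdd_add]
        exact hT_mul (hsingle _ _) ih
    exact this Finset.univ
  refine ⟨hall, fun v w => ⟨Equiv.mulRight (v⁻¹ * w), hall _, ?_⟩⟩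
  simp
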